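/- Let E ⊆ ℕ² be a value set of a fractional ideal (closed under min, satisfying the exchange property, with conductor 𝐜_E and minimum α⁰), and let γ ≥ 𝐜_E. Then the number of elements in a saturated chain count from α⁰ to γ satisfies d_E(α⁰, γ) = ∑_{i=1}^{2} (γ_i − α⁰_i − #((ℕ + α⁰_i) ∖ pr_i(E))) − Θ₂, where pr_i is the i-th projection and Θ₂ = #(pr₂-images of relative maximal points of E). -/

import Mathlib

open scoped Classical


/-- A saturated chain of length `n` in `E ⊆ ℕ²` from `a` to `b`. -/
def IsSatChain2 (E : Set (ℕ × ℕ)) (a b : ℕ × ℕ) (n : ℕ) : Prop :=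
  ∃ α : ℕ → ℕ × ℕ, α 0 = a ∧ α n = b ∧ (∀ i ≤ n, α i ∈ E) ∧
    (∀ i < n, α i < α (i + 1)) ∧
    ∀ i < n, ∀ ε ∈ E, ¬ (α i < ε ∧ ε < α (i + 1))

/-- The set of relative maximal points of `E ⊆ ℕ²` (for `r = 2` these are exactly the
maximal points: elements of `E` with empty fiber). -/
def RelMax (E : Set (ℕ × ℕ)) : Set (ℕ × ℕ) :=
  {a ∈ E | ¬ ∃ b ∈ E, (b.1 = a.1 ∧ a.2 < b.2) ∨ (b.2 = a.2 ∧ a.1 < b.1)}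


section Aux
variable {E : Set (ℕ × ℕ)}

/-- first coordinates of `E`. -/
private def pr1 (E : Set (ℕ × ℕ)) : Set ℕ := Prod.fst '' E
private def pr2 (E : Set (ℕ × ℕ)) : Set ℕ := Prod.snd '' E

private lemma prod_lt_iff' {a b : ℕ × ℕ} (h : a < b) :
    a.1 ≤ b.1 ∧ a.2 ≤ b.2 ∧ (a.1 < b.1 ∨ a.2 < b.2) := by
  rw [Prod.lt_iff] at h
  rcases h with ⟨h1, h2⟩ | ⟨h1, h2⟩ <;> exact ⟨by omega, by omega, by omega⟩

private lemma lt_of_coords {a b : ℕ × ℕ} (h1 : a.1 ≤ b.1) (h2 : a.2 ≤ b.2)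
    (h3 : a.1 < b.1 ∨ a.2 < b.2) : a < b := by
  rw [Prod.lt_iff]; omega


/-- In a cover step `a ⋖ b`, every element of `E` whose first coordinate lies strictly
between `a.1` and `b.1` has second coordinate `< a.2`. -/
private lemma col_lt (hmin : ∀ a ∈ E, ∀ b ∈ E, (min a.1 b.1, min a.2 b.2) ∈ E)
    {a b : ℕ × ℕ} (_ : a ∈ E) (hb : b ∈ E) (hab : a < b)
    (hno : ∀ ε ∈ E, ¬(a < ε ∧ ε < b)) {x y : ℕ}
    (hx1 : a.1 < x) (hx2 : x < b.1) (hxy : (x, y) ∈ E) : y < a.2 := by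
  obtain ⟨h1, h2, -⟩ := prod_lt_iff' hab
  by_contra h
  push_neg at h
  have hε : (min x b.1, min y b.2) ∈ E := hmin (x, y) hxy b hb
  rw [min_eq_left hx2.le] at hε
  refine hno _ hε ⟨lt_of_coords (by dsimp only; omega) (by dsimp only; omega) (by dsimp only; omega),
    lt_of_coords (by dsimp only; omega) (by dsimp only; omega) (by dsimp only; omega)⟩

private lemma row_lt (hmin : ∀ a ∈ E, ∀ b ∈ E, (min a.1 b.1, min a.2 b.2) ∈ E)
    {a b : ℕ × ℕ} (_ : a ∈ E) (hb : b ∈ E) (hab : a < b)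
    (hno : ∀ ε ∈ E, ¬(a < ε ∧ ε < b)) {x y : ℕ}
    (hy1 : a.2 < y) (hy2 : y < b.2) (hxy : (x, y) ∈ E) : x < a.1 := by
  obtain ⟨h1, h2, -⟩ := prod_lt_iff' hab
  by_contra h
  push_neg at h
  have hε : (min x b.1, min y b.2) ∈ E := hmin (x, y) hxy b hb
  rw [min_eq_left hy2.le] at hε
  refine hno _ hε ⟨lt_of_coords (by dsimp only; omega) (by dsimp only; omega) (by dsimp only; omega),
    lt_of_coords (by dsimp only; omega) (by dsimp only; omega) (by dsimp only; omega)⟩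

end Aux

section Aux2
variable {E : Set (ℕ × ℕ)} {cE : ℕ × ℕ}

private lemma relmax_mem {m : ℕ × ℕ} (h : m ∈ RelMax E) : m ∈ E := h.1

private lemma relmax_lt_c (hcond : ∀ γ : ℕ × ℕ, cE ≤ γ → γ ∈ E)
    {m : ℕ × ℕ} (h : m ∈ RelMax E) : m.1 < cE.1 ∧ m.2 < cE.2 := by
  constructor
  · by_contra hc; push_neg at hc
    exact h.2 ⟨(m.1, max (m.2 + 1) cE.2), hcond _ (by rw [Prod.le_def]; dsimp only; omega),
      Or.inl ⟨rfl, by dsimp only; omega⟩⟩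
  · by_contra hc; push_neg at hc
    exact h.2 ⟨(max (m.1 + 1) cE.1, m.2), hcond _ (by rw [Prod.le_def]; dsimp only; omega),
      Or.inr ⟨rfl, by dsimp only; omega⟩⟩

private lemma relmax_inj_fst {m m' : ℕ × ℕ} (h : m ∈ RelMax E) (h' : m' ∈ RelMax E)
    (he : m.1 = m'.1) : m = m' := by
  rcases lt_trichotomy m.2 m'.2 with hl | hl | hl
  · exact absurd ⟨m', h'.1, Or.inl ⟨he.symm, hl⟩⟩ h.2
  · exact Prod.ext he hl
  · exact absurd ⟨m, h.1, Or.inl ⟨he, hl⟩⟩ h'.2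

private lemma relmax_inj_snd {m m' : ℕ × ℕ} (h : m ∈ RelMax E) (h' : m' ∈ RelMax E)
    (he : m.2 = m'.2) : m = m' := by
  rcases lt_trichotomy m.1 m'.1 with hl | hl | hl
  · exact absurd ⟨m', h'.1, Or.inr ⟨he.symm, hl⟩⟩ h.2
  · exact Prod.ext hl he
  · exact absurd ⟨m, h.1, Or.inr ⟨he, hl⟩⟩ h'.2

/-- Each column through the open strip of a cover contains a relative maximal. -/
private lemma strip_relmax_col
    (hmin : ∀ a ∈ E, ∀ b ∈ E, (min a.1 b.1, min a.2 b.2) ∈ E)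
    (hexch2 : ∀ a ∈ E, ∀ b ∈ E, a.2 = b.2 → a.1 ≠ b.1 →
      ∃ ε ∈ E, a.2 < ε.2 ∧ ε.1 = min a.1 b.1)
    {a b : ℕ × ℕ} (ha : a ∈ E) (hb : b ∈ E) (hab : a < b)
    (hno : ∀ ε ∈ E, ¬(a < ε ∧ ε < b)) {x : ℕ}
    (hx1 : a.1 < x) (hx2 : x < b.1) (hxE : x ∈ Prod.fst '' E) :
    ∃ m ∈ RelMax E, m.1 = x := by
  obtain ⟨p, hp, hpx⟩ := hxE
  have hp' : (x, p.2) ∈ E := by rwa [← hpx, Prod.mk.eta]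
  have hcol : ∀ y, (x, y) ∈ E → y < a.2 := fun y hy => col_lt hmin ha hb hab hno hx1 hx2 hy
  set F : Finset ℕ := (Finset.range a.2).filter (fun y => (x, y) ∈ E) with hF
  have hne : F.Nonempty := ⟨p.2, by simp [hF, Finset.mem_filter, hcol p.2 hp', hp']⟩
  set m2 := F.max' hne with hm2
  have hmem : (x, m2) ∈ E := (Finset.mem_filter.mp (F.max'_mem hne)).2
  refine ⟨(x, m2), ⟨hmem, ?_⟩, rfl⟩
  rintro ⟨c, hc, ⟨hc1, hc2⟩ | ⟨hc1, hc2⟩⟩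
  · -- c in column x above m2
    have hcc : c = (x, c.2) := Prod.ext hc1 rfl
    have hcE' : (x, c.2) ∈ E := by rwa [hcc] at hc
    have : c.2 ∈ F := Finset.mem_filter.mpr ⟨Finset.mem_range.mpr (hcol c.2 hcE'), hcE'⟩
    exact absurd (F.le_max' _ this) (by dsimp only at hc2; omega)
  · -- c in row m2 to the right: exchange pushes up in column x
    obtain ⟨ε, hε, hε2, hε1⟩ := hexch2 (x, m2) hmem c hc hc1.symm (by dsimp only at hc2 ⊢; omega)
    rw [min_eq_left (by dsimp only at hc2 ⊢; omega)] at hε1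
    have hεε : ε = (x, ε.2) := Prod.ext hε1 rfl
    have hεE : (x, ε.2) ∈ E := by rwa [hεε] at hε
    have : ε.2 ∈ F := Finset.mem_filter.mpr ⟨Finset.mem_range.mpr (hcol ε.2 hεE), hεE⟩
    exact absurd (F.le_max' _ this) (by dsimp only at hε2; omega)

private lemma strip_relmax_row
    (hmin : ∀ a ∈ E, ∀ b ∈ E, (min a.1 b.1, min a.2 b.2) ∈ E)
    (hexch1 : ∀ a ∈ E, ∀ b ∈ E, a.1 = b.1 → a.2 ≠ b.2 →
      ∃ ε ∈ E, a.1 < ε.1 ∧ ε.2 = min a.2 b.2)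
    {a b : ℕ × ℕ} (ha : a ∈ E) (hb : b ∈ E) (hab : a < b)
    (hno : ∀ ε ∈ E, ¬(a < ε ∧ ε < b)) {y : ℕ}
    (hy1 : a.2 < y) (hy2 : y < b.2) (hyE : y ∈ Prod.snd '' E) :
    ∃ m ∈ RelMax E, m.2 = y := by
  obtain ⟨p, hp, hpy⟩ := hyE
  have hp' : (p.1, y) ∈ E := by rwa [← hpy, Prod.mk.eta]
  have hrow : ∀ x, (x, y) ∈ E → x < a.1 := fun x hx => row_lt hmin ha hb hab hno hy1 hy2 hx
  set F : Finset ℕ := (Finset.range a.1).filter (fun x => (x, y) ∈ E) with hF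
  have hne : F.Nonempty := ⟨p.1, by simp [hF, Finset.mem_filter, hrow p.1 hp', hp']⟩
  set m1 := F.max' hne with hm1
  have hmem : (m1, y) ∈ E := (Finset.mem_filter.mp (F.max'_mem hne)).2
  refine ⟨(m1, y), ⟨hmem, ?_⟩, rfl⟩
  rintro ⟨c, hc, ⟨hc1, hc2⟩ | ⟨hc1, hc2⟩⟩
  · obtain ⟨ε, hε, hε1, hε2⟩ := hexch1 (m1, y) hmem c hc hc1.symm (by dsimp only at hc2 ⊢; omega)
    rw [min_eq_left (by dsimp only at hc2 ⊢; omega)] at hε2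
    have hεε : ε = (ε.1, y) := Prod.ext rfl hε2
    have hεE : (ε.1, y) ∈ E := by rwa [hεε] at hε
    have : ε.1 ∈ F := Finset.mem_filter.mpr ⟨Finset.mem_range.mpr (hrow ε.1 hεE), hεE⟩
    exact absurd (F.le_max' _ this) (by dsimp only at hε1; omega)
  · have hcc : c = (c.1, y) := Prod.ext rfl hc1
    have hcE' : (c.1, y) ∈ E := by rwa [hcc] at hc
    have : c.1 ∈ F := Finset.mem_filter.mpr ⟨Finset.mem_range.mpr (hrow c.1 hcE'), hcE'⟩
    exact absurd (F.le_max' _ this) (by dsimp only at hc2; omega)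

end Aux2

section Count
variable (E : Set (ℕ × ℕ)) (cE : ℕ × ℕ)

private noncomputable def McF : Finset (ℕ × ℕ) :=
  ((Finset.range cE.1) ×ˢ (Finset.range cE.2)).filter (· ∈ RelMax E)

private noncomputable def Mc (b : ℕ × ℕ) : ℕ :=
  ((McF E cE).filter (fun m => m.1 < b.1 ∧ m.2 < b.2)).card

private noncomputable def N1 (t : ℕ) : ℕ :=
  ((Finset.range t).filter (· ∈ Prod.fst '' E)).card

private noncomputable def N2 (t : ℕ) : ℕ :=
  ((Finset.range t).filter (· ∈ Prod.snd '' E)).card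

variable {E cE}

private lemma mem_McF (hcond : ∀ γ : ℕ × ℕ, cE ≤ γ → γ ∈ E) {m : ℕ × ℕ} :
    m ∈ McF E cE ↔ m ∈ RelMax E := by
  unfold McF
  simp only [Finset.mem_filter, Finset.mem_product, Finset.mem_range]
  exact ⟨fun h => h.2, fun h => ⟨⟨(relmax_lt_c hcond h).1, (relmax_lt_c hcond h).2⟩, h⟩⟩

/-- Splitting `N1` at `a ≤ b`. -/
private lemma N_split (P : Set ℕ) {s t : ℕ} (hst : s ≤ t) :
    ((Finset.range t).filter (· ∈ P)).card
      = ((Finset.range s).filter (· ∈ P)).card + ((Finset.Ico s t).filter (· ∈ P)).card := by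
  rw [Finset.range_eq_Ico,
    ← Finset.Ico_union_Ico_eq_Ico (Nat.zero_le s) hst, Finset.filter_union,
    Finset.card_union_of_disjoint]
  · rw [Finset.range_eq_Ico]
  exact Finset.disjoint_filter_filter (p := (· ∈ P)) (q := (· ∈ P)) (Finset.Ico_disjoint_Ico_consecutive 0 s t)

/-- Splitting the half open interval strip at its left end (which is in `P`). -/
private lemma Ico_filter_split (P : Set ℕ) {s t : ℕ} (hst : s < t) (hs : s ∈ P) :
    ((Finset.Ico s t).filter (· ∈ P)).card = 1 + ((Finset.Ioo s t).filter (· ∈ P)).card := by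
  rw [← Finset.Ioo_insert_left hst, Finset.filter_insert, if_pos hs, Finset.card_insert_of_notMem
    (by simp)]
  omega

end Count

section Strips
variable {E : Set (ℕ × ℕ)} {cE : ℕ × ℕ}

private lemma strip1_card
    (hmin : ∀ a ∈ E, ∀ b ∈ E, (min a.1 b.1, min a.2 b.2) ∈ E)
    (hexch2 : ∀ a ∈ E, ∀ b ∈ E, a.2 = b.2 → a.1 ≠ b.1 →
      ∃ ε ∈ E, a.2 < ε.2 ∧ ε.1 = min a.1 b.1)
    (hcond : ∀ γ : ℕ × ℕ, cE ≤ γ → γ ∈ E)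
    {a b : ℕ × ℕ} (ha : a ∈ E) (hb : b ∈ E) (hab : a < b)
    (hno : ∀ ε ∈ E, ¬(a < ε ∧ ε < b)) :
    ((McF E cE).filter (fun m => a.1 < m.1 ∧ m.1 < b.1)).card
      = ((Finset.Ioo a.1 b.1).filter (· ∈ Prod.fst '' E)).card := by
  refine Finset.card_bij (fun m _ => m.1) ?_ ?_ ?_
  · intro m hm
    obtain ⟨hmF, h1, h2⟩ := Finset.mem_filter.mp hm
    exact Finset.mem_filter.mpr ⟨Finset.mem_Ioo.mpr ⟨h1, h2⟩,
      ⟨m, relmax_mem ((mem_McF hcond).mp hmF), rfl⟩⟩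
  · intro m hm m' hm' he
    exact relmax_inj_fst ((mem_McF hcond).mp (Finset.mem_filter.mp hm).1)
      ((mem_McF hcond).mp (Finset.mem_filter.mp hm').1) he
  · intro x hx
    obtain ⟨hxI, hxE⟩ := Finset.mem_filter.mp hx
    obtain ⟨hx1, hx2⟩ := Finset.mem_Ioo.mp hxI
    obtain ⟨m, hm, hm1⟩ := strip_relmax_col hmin hexch2 ha hb hab hno hx1 hx2 hxE
    exact ⟨m, Finset.mem_filter.mpr ⟨(mem_McF hcond).mpr hm, by omega, by omega⟩, hm1⟩

private lemma strip2_card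
    (hmin : ∀ a ∈ E, ∀ b ∈ E, (min a.1 b.1, min a.2 b.2) ∈ E)
    (hexch1 : ∀ a ∈ E, ∀ b ∈ E, a.1 = b.1 → a.2 ≠ b.2 →
      ∃ ε ∈ E, a.1 < ε.1 ∧ ε.2 = min a.2 b.2)
    (hcond : ∀ γ : ℕ × ℕ, cE ≤ γ → γ ∈ E)
    {a b : ℕ × ℕ} (ha : a ∈ E) (hb : b ∈ E) (hab : a < b)
    (hno : ∀ ε ∈ E, ¬(a < ε ∧ ε < b)) :
    ((McF E cE).filter (fun m => a.2 < m.2 ∧ m.2 < b.2)).card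
      = ((Finset.Ioo a.2 b.2).filter (· ∈ Prod.snd '' E)).card := by
  refine Finset.card_bij (fun m _ => m.2) ?_ ?_ ?_
  · intro m hm
    obtain ⟨hmF, h1, h2⟩ := Finset.mem_filter.mp hm
    exact Finset.mem_filter.mpr ⟨Finset.mem_Ioo.mpr ⟨h1, h2⟩,
      ⟨m, relmax_mem ((mem_McF hcond).mp hmF), rfl⟩⟩
  · intro m hm m' hm' he
    exact relmax_inj_snd ((mem_McF hcond).mp (Finset.mem_filter.mp hm).1)
      ((mem_McF hcond).mp (Finset.mem_filter.mp hm').1) he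
  · intro y hy
    obtain ⟨hyI, hyE⟩ := Finset.mem_filter.mp hy
    obtain ⟨hy1, hy2⟩ := Finset.mem_Ioo.mp hyI
    obtain ⟨m, hm, hm2⟩ := strip_relmax_row hmin hexch1 ha hb hab hno hy1 hy2 hyE
    exact ⟨m, Finset.mem_filter.mpr ⟨(mem_McF hcond).mpr hm, by omega, by omega⟩, hm2⟩

end Strips

section CoverStep
variable {E : Set (ℕ × ℕ)} {cE : ℕ × ℕ}

private lemma Mc_diff (hcond : ∀ γ : ℕ × ℕ, cE ≤ γ → γ ∈ E) {a b : ℕ × ℕ} (hab : a ≤ b) :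
    Mc E cE b = Mc E cE a
      + ((McF E cE).filter
          (fun m => (m.1 < b.1 ∧ m.2 < b.2) ∧ ¬(m.1 < a.1 ∧ m.2 < a.2))).card := by
  obtain ⟨h1, h2⟩ := Prod.le_def.mp hab
  unfold Mc
  rw [← Finset.card_filter_add_card_filter_not
    (s := (McF E cE).filter (fun m => m.1 < b.1 ∧ m.2 < b.2))
    (p := fun m => m.1 < a.1 ∧ m.2 < a.2), Finset.filter_filter, Finset.filter_filter]
  congr 2
  apply Finset.filter_congr
  intro m _
  constructor
  · intro h; exact h.2
  · intro h; exact ⟨⟨by omega, by omega⟩, h⟩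

private lemma cover_step
    (hmin : ∀ a ∈ E, ∀ b ∈ E, (min a.1 b.1, min a.2 b.2) ∈ E)
    (hexch1 : ∀ a ∈ E, ∀ b ∈ E, a.1 = b.1 → a.2 ≠ b.2 →
      ∃ ε ∈ E, a.1 < ε.1 ∧ ε.2 = min a.2 b.2)
    (hexch2 : ∀ a ∈ E, ∀ b ∈ E, a.2 = b.2 → a.1 ≠ b.1 →
      ∃ ε ∈ E, a.2 < ε.2 ∧ ε.1 = min a.1 b.1)
    (hcond : ∀ γ : ℕ × ℕ, cE ≤ γ → γ ∈ E)
    {a b : ℕ × ℕ} (ha : a ∈ E) (hb : b ∈ E) (hab : a < b)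
    (hno : ∀ ε ∈ E, ¬(a < ε ∧ ε < b)) :
    N1 E b.1 + N2 E b.2 + Mc E cE a = N1 E a.1 + N2 E a.2 + Mc E cE b + 1 := by
  obtain ⟨h1, h2, hstrict⟩ := prod_lt_iff' hab
  have haE1 : a.1 ∈ Prod.fst '' E := ⟨a, ha, rfl⟩
  have haE2 : a.2 ∈ Prod.snd '' E := ⟨a, ha, rfl⟩
  have hN1 : N1 E b.1 = N1 E a.1 + ((Finset.Ico a.1 b.1).filter (· ∈ Prod.fst '' E)).card :=
    N_split _ h1
  have hN2 : N2 E b.2 = N2 E a.2 + ((Finset.Ico a.2 b.2).filter (· ∈ Prod.snd '' E)).card :=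
    N_split _ h2
  have hMc := Mc_diff (E := E) hcond hab.le
  have hs1 := strip1_card (cE := cE) hmin hexch2 hcond ha hb hab hno
  have hs2 := strip2_card (cE := cE) hmin hexch1 hcond ha hb hab hno
  rcases h1.lt_or_eq with h1' | h1' <;> rcases h2.lt_or_eq with h2' | h2'
  · -- diagonal case: `a` is a relative maximal
    have amax : a ∈ RelMax E := by
      refine ⟨ha, ?_⟩
      rintro ⟨c, hc, ⟨hc1, hc2⟩ | ⟨hc1, hc2⟩⟩ <;>
      · have hε : (min c.1 b.1, min c.2 b.2) ∈ E := hmin c hc b hb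
        exact hno _ hε ⟨lt_of_coords (by dsimp only; omega) (by dsimp only; omega)
          (by dsimp only; omega), lt_of_coords (by dsimp only; omega) (by dsimp only; omega)
          (by dsimp only; omega)⟩
    have haMcF : a ∈ McF E cE := (mem_McF hcond).mpr amax
    have hD : (McF E cE).filter
          (fun m => (m.1 < b.1 ∧ m.2 < b.2) ∧ ¬(m.1 < a.1 ∧ m.2 < a.2))
        = insert a (((McF E cE).filter (fun m => a.1 < m.1 ∧ m.1 < b.1))
            ∪ ((McF E cE).filter (fun m => a.2 < m.2 ∧ m.2 < b.2))) := by
      ext m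
      simp only [Finset.mem_filter, Finset.mem_insert, Finset.mem_union]
      constructor
      · rintro ⟨hmF, ⟨hb1, hb2⟩, hna⟩
        have hrm : m ∈ RelMax E := (mem_McF hcond).mp hmF
        rcases lt_trichotomy m.1 a.1 with hx | hx | hx
        · have hy : a.2 ≤ m.2 := by omega
          rcases hy.lt_or_eq with hy' | hy'
          · exact Or.inr (Or.inr ⟨hmF, hy', hb2⟩)
          · exact absurd ⟨a, ha, Or.inr ⟨hy', hx⟩⟩ hrm.2
        · rcases lt_trichotomy m.2 a.2 with hy | hy | hy
          · exact absurd ⟨a, ha, Or.inl ⟨hx.symm, hy⟩⟩ hrm.2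
          · exact Or.inl (Prod.ext hx hy)
          · exact absurd ⟨lt_of_coords (by omega) (by omega) (by omega),
              lt_of_coords (by omega) (by omega) (by omega)⟩ (hno m hrm.1)
        · exact Or.inr (Or.inl ⟨hmF, hx, hb1⟩)
      · rintro (rfl | ⟨hmF, hx1, hx2⟩ | ⟨hmF, hy1, hy2⟩)
        · exact ⟨haMcF, ⟨h1', h2'⟩, by omega⟩
        · have hrm : m ∈ RelMax E := (mem_McF hcond).mp hmF
          have hmE : (m.1, m.2) ∈ E := by rw [Prod.mk.eta]; exact hrm.1
          have := col_lt hmin ha hb hab hno hx1 hx2 hmE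
          exact ⟨hmF, ⟨by omega, by omega⟩, by omega⟩
        · have hrm : m ∈ RelMax E := (mem_McF hcond).mp hmF
          have hmE : (m.1, m.2) ∈ E := by rw [Prod.mk.eta]; exact hrm.1
          have := row_lt hmin ha hb hab hno hy1 hy2 hmE
          exact ⟨hmF, ⟨by omega, by omega⟩, by omega⟩
    have hanotin : a ∉ ((McF E cE).filter (fun m => a.1 < m.1 ∧ m.1 < b.1))
        ∪ ((McF E cE).filter (fun m => a.2 < m.2 ∧ m.2 < b.2)) := by
      simp only [Finset.mem_union, Finset.mem_filter]
      omega
    have hdisj : Disjoint ((McF E cE).filter (fun m => a.1 < m.1 ∧ m.1 < b.1))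
        ((McF E cE).filter (fun m => a.2 < m.2 ∧ m.2 < b.2)) := by
      rw [Finset.disjoint_left]
      intro m hm hm'
      obtain ⟨hmF, hx1, hx2⟩ := Finset.mem_filter.mp hm
      obtain ⟨-, hy1, hy2⟩ := Finset.mem_filter.mp hm'
      have hrm : m ∈ RelMax E := (mem_McF hcond).mp hmF
      have hmE : (m.1, m.2) ∈ E := by rw [Prod.mk.eta]; exact hrm.1
      have := col_lt hmin ha hb hab hno hx1 hx2 hmE
      omega
    rw [hD, Finset.card_insert_of_notMem hanotin, Finset.card_union_of_disjoint hdisj] at hMc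
    rw [Ico_filter_split _ h1' haE1] at hN1
    rw [Ico_filter_split _ h2' haE2] at hN2
    omega
  · -- horizontal case
    have hD : (McF E cE).filter
          (fun m => (m.1 < b.1 ∧ m.2 < b.2) ∧ ¬(m.1 < a.1 ∧ m.2 < a.2))
        = (McF E cE).filter (fun m => a.1 < m.1 ∧ m.1 < b.1) := by
      apply Finset.filter_congr
      intro m hmF
      have hrm : m ∈ RelMax E := (mem_McF hcond).mp hmF
      constructor
      · rintro ⟨⟨hb1, hb2⟩, hna⟩
        rcases (show a.1 ≤ m.1 by omega).lt_or_eq with hx | hx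
        · exact ⟨hx, hb1⟩
        · exact absurd ⟨a, ha, Or.inl ⟨hx, by omega⟩⟩ hrm.2
      · rintro ⟨hx1, hx2⟩
        have hmE : (m.1, m.2) ∈ E := by rw [Prod.mk.eta]; exact hrm.1
        have := col_lt hmin ha hb hab hno hx1 hx2 hmE
        exact ⟨⟨by omega, by omega⟩, by omega⟩
    rw [hD] at hMc
    rw [Ico_filter_split _ h1' haE1] at hN1
    have hN2' : N2 E b.2 = N2 E a.2 := by rw [← h2']
    omega
  · -- vertical case
    have hD : (McF E cE).filter
          (fun m => (m.1 < b.1 ∧ m.2 < b.2) ∧ ¬(m.1 < a.1 ∧ m.2 < a.2))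
        = (McF E cE).filter (fun m => a.2 < m.2 ∧ m.2 < b.2) := by
      apply Finset.filter_congr
      intro m hmF
      have hrm : m ∈ RelMax E := (mem_McF hcond).mp hmF
      constructor
      · rintro ⟨⟨hb1, hb2⟩, hna⟩
        rcases (show a.2 ≤ m.2 by omega).lt_or_eq with hy | hy
        · exact ⟨hy, hb2⟩
        · exact absurd ⟨a, ha, Or.inr ⟨hy, by omega⟩⟩ hrm.2
      · rintro ⟨hy1, hy2⟩
        have hmE : (m.1, m.2) ∈ E := by rw [Prod.mk.eta]; exact hrm.1
        have := row_lt hmin ha hb hab hno hy1 hy2 hmE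
        exact ⟨⟨by omega, by omega⟩, by omega⟩
    rw [hD] at hMc
    rw [Ico_filter_split _ h2' haE2] at hN2
    have hN1' : N1 E b.1 = N1 E a.1 := by rw [← h1']
    omega
  · exact absurd (Prod.ext h1' h2') hab.ne

end CoverStep


/-- Guzmán–Hefez colength formula for `r = 2`: Let `E ⊆ ℕ²` be the value set
of a fractional ideal (closed under minima, with the exchange property, with conductor
`𝐜_E` and minimum `α⁰`), and let `γ ≥ 𝐜_E`.  Then the saturated-chain distance from `α⁰`
to `γ` satisfies
`d_E(α⁰, γ) = ∑_{i=1,2} (γ_i − α⁰_i − #((ℕ + α⁰_i) ∖ pr_i(E))) − Θ₂`,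
where `Θ₂` is the number of second coordinates of relative maximal points of `E`;
equivalently (avoiding truncated subtraction)
`d_E(α⁰,γ) + Θ₂ + #gaps₁ + #gaps₂ + α⁰₁ + α⁰₂ = γ₁ + γ₂`. -/
theorem distance_formula_two_branches
    (E : Set (ℕ × ℕ))
    (hmin : ∀ a ∈ E, ∀ b ∈ E, (min a.1 b.1, min a.2 b.2) ∈ E)
    (hexch1 : ∀ a ∈ E, ∀ b ∈ E, a.1 = b.1 → a.2 ≠ b.2 →
      ∃ ε ∈ E, a.1 < ε.1 ∧ ε.2 = min a.2 b.2)
    (hexch2 : ∀ a ∈ E, ∀ b ∈ E, a.2 = b.2 → a.1 ≠ b.1 →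
      ∃ ε ∈ E, a.2 < ε.2 ∧ ε.1 = min a.1 b.1)
    (α0 : ℕ × ℕ) (hα0 : α0 ∈ E ∧ ∀ a ∈ E, α0 ≤ a)
    (cE : ℕ × ℕ) (hcE : cE ∈ E ∧ ∀ γ : ℕ × ℕ, cE ≤ γ → γ ∈ E)
    (hcEmin : ∀ c' ∈ E, (∀ γ : ℕ × ℕ, c' ≤ γ → γ ∈ E) → cE ≤ c')
    (γ : ℕ × ℕ) (hγ : cE ≤ γ)
    (n : ℕ) (hchain : IsSatChain2 E α0 γ n) :
    n + (Prod.snd '' RelMax E).ncard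
      + {m : ℕ | α0.1 ≤ m ∧ m ∉ Prod.fst '' E}.ncard
      + {m : ℕ | α0.2 ≤ m ∧ m ∉ Prod.snd '' E}.ncard
      + α0.1 + α0.2 = γ.1 + γ.2 := by
  obtain ⟨α, hα00, hαn, hαmem, hαlt, hαsat⟩ := hchain
  have hcond := hcE.2
  have hα0γ : α0 ≤ γ := (hα0.2 cE hcE.1).trans hγ
  obtain ⟨hg1, hg2⟩ := Prod.le_def.mp hα0γ
  obtain ⟨hc1, hc2⟩ := Prod.le_def.mp hγ
  -- the chain computation
  have key : ∀ i, i ≤ n →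
      N1 E (α i).1 + N2 E (α i).2 + Mc E cE α0
        = N1 E α0.1 + N2 E α0.2 + Mc E cE (α i) + i := by
    intro i
    induction i with
    | zero => intro _; rw [hα00]; omega
    | succ k ih =>
      intro hk
      have hk' : k ≤ n := by omega
      have h0 := ih hk'
      have hstep := cover_step (cE := cE) hmin hexch1 hexch2 hcond
        (hαmem k hk') (hαmem (k + 1) hk) (hαlt k (by omega)) (hαsat k (by omega))
      omega
  have keyn := key n le_rfl
  rw [hαn] at keyn
  -- endpoint values
  have hN1z : N1 E α0.1 = 0 := by
    rw [N1, Finset.card_eq_zero, Finset.filter_eq_empty_iff]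
    rintro x hx ⟨p, hp, rfl⟩
    exact absurd (Prod.le_def.mp (hα0.2 p hp)).1 (by simp at hx; omega)
  have hN2z : N2 E α0.2 = 0 := by
    rw [N2, Finset.card_eq_zero, Finset.filter_eq_empty_iff]
    rintro x hx ⟨p, hp, rfl⟩
    exact absurd (Prod.le_def.mp (hα0.2 p hp)).2 (by simp at hx; omega)
  have hMcz : Mc E cE α0 = 0 := by
    rw [Mc, Finset.card_eq_zero, Finset.filter_eq_empty_iff]
    intro m hm
    have hrm : m ∈ RelMax E := (mem_McF hcond).mp hm
    have := Prod.le_def.mp (hα0.2 m hrm.1)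
    omega
  have hMcγ : Mc E cE γ = (McF E cE).card := by
    rw [Mc, Finset.filter_true_of_mem]
    intro m hm
    unfold McF at hm
    simp only [Finset.mem_filter, Finset.mem_product, Finset.mem_range] at hm
    omega
  -- Θ₂
  have hΘset : Prod.snd '' RelMax E = ↑((McF E cE).image Prod.snd) := by
    ext y
    simp only [Set.mem_image, Finset.coe_image, Finset.mem_coe]
    constructor
    · rintro ⟨m, hm, rfl⟩
      exact ⟨m, (mem_McF hcond).mpr hm, rfl⟩
    · rintro ⟨m, hm, rfl⟩
      exact ⟨m, (mem_McF hcond).mp hm, rfl⟩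
  have hΘ : (Prod.snd '' RelMax E).ncard = (McF E cE).card := by
    rw [hΘset, Set.ncard_coe_finset, Finset.card_image_of_injOn]
    intro m hm m' hm' he
    exact relmax_inj_snd ((mem_McF hcond).mp hm) ((mem_McF hcond).mp hm') he
  -- gaps
  have hgap1set : {m : ℕ | α0.1 ≤ m ∧ m ∉ Prod.fst '' E}
      = ↑((Finset.Ico α0.1 γ.1).filter (fun x => x ∉ Prod.fst '' E)) := by
    ext x
    simp only [Set.mem_setOf_eq, Finset.coe_filter, Finset.mem_Ico, Set.mem_setOf_eq]
    constructor
    · rintro ⟨hle, hnot⟩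
      refine ⟨⟨hle, ?_⟩, hnot⟩
      by_contra hge
      exact hnot ⟨(x, cE.2), hcond (x, cE.2) (Prod.le_def.mpr ⟨by dsimp only; omega, le_rfl⟩), rfl⟩
    · rintro ⟨⟨hle, _⟩, hnot⟩
      exact ⟨hle, hnot⟩
  have hgap2set : {m : ℕ | α0.2 ≤ m ∧ m ∉ Prod.snd '' E}
      = ↑((Finset.Ico α0.2 γ.2).filter (fun y => y ∉ Prod.snd '' E)) := by
    ext y
    simp only [Set.mem_setOf_eq, Finset.coe_filter, Finset.mem_Ico, Set.mem_setOf_eq]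
    constructor
    · rintro ⟨hle, hnot⟩
      refine ⟨⟨hle, ?_⟩, hnot⟩
      by_contra hge
      exact hnot ⟨(cE.1, y), hcond (cE.1, y) (Prod.le_def.mpr ⟨le_rfl, by dsimp only; omega⟩), rfl⟩
    · rintro ⟨⟨hle, _⟩, hnot⟩
      exact ⟨hle, hnot⟩
  have hgap1 : N1 E γ.1 + ((Finset.Ico α0.1 γ.1).filter (fun x => x ∉ Prod.fst '' E)).card
      + α0.1 = γ.1 := by
    have hpn := Finset.card_filter_add_card_filter_not
      (s := Finset.Ico α0.1 γ.1) (p := fun x => x ∈ Prod.fst '' E)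
    rw [Nat.card_Ico] at hpn
    have : N1 E γ.1 = N1 E α0.1 + ((Finset.Ico α0.1 γ.1).filter (· ∈ Prod.fst '' E)).card :=
      N_split _ hg1
    omega
  have hgap2 : N2 E γ.2 + ((Finset.Ico α0.2 γ.2).filter (fun y => y ∉ Prod.snd '' E)).card
      + α0.2 = γ.2 := by
    have hpn := Finset.card_filter_add_card_filter_not
      (s := Finset.Ico α0.2 γ.2) (p := fun y => y ∈ Prod.snd '' E)
    rw [Nat.card_Ico] at hpn
    have : N2 E γ.2 = N2 E α0.2 + ((Finset.Ico α0.2 γ.2).filter (· ∈ Prod.snd '' E)).card :=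
      N_split _ hg2
    omega
  rw [hΘ, hgap1set, hgap2set, Set.ncard_coe_finset, Set.ncard_coe_finset]
  omega
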